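/- arXiv:2308.09466 — 2 statements merged into one kernel-verified Lean document; each statement's English description precedes it below -/
import Mathlib

section
/- Let X be an infinite set and let S be a submonoid of the monoid of all functions X → X under composition. Suppose that for every a ∈ X there exist n ∈ ℕ and α, β, γ_1, …, γ_n ∈ S such that: (i) α and β agree on X \ {a} and α(a) ≠ β(a); (ii) a ∈ range(γ_i) for all i ∈ {1,…,n}; (iii) for every s ∈ S and every x ∈ X with x ≠ s(a), there is i ∈ {1,…,n} with range(γ_i) ∩ s⁻¹({x}) = ∅. Then the Zariski topology on S coincides with the topology of pointwise convergence on S. -/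
/-- Evaluation of the word `p_k · s · p_{k-1} · s ⋯ s · p_0` at `s`,
where the word is given by its lowest coefficient `p₀` and the list
`ps = [p₁, …, p_k]` of the remaining coefficients. -/
def wordEval {S : Type*} [Monoid S] (s : S) (p₀ : S) (ps : List S) : S :=
  ps.foldl (fun acc q => q * s * acc) p₀

/-- The Zariski topology on a monoid `S`: generated by the sets
`M_{φ,ψ} = {s | φ(s) ≠ ψ(s)}` for all pairs of words `φ, ψ` with coefficients in `S`. -/
def zariskiTopology (S : Type*) [Monoid S] : TopologicalSpace S :=
  TopologicalSpace.generateFrom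
    { M : Set S | ∃ (p₀ : S) (ps : List S) (q₀ : S) (qs : List S),
        M = { s : S | wordEval s p₀ ps ≠ wordEval s q₀ qs } }

/-- The topology of pointwise convergence on functions `X → X`:
the product topology where every factor `X` is discrete. -/
def pwTop (X : Type*) : TopologicalSpace (X → X) :=
  @Pi.topologicalSpace X (fun _ => X) (fun _ => ⊥)

/-- The technical criterion: if for every `a ∈ X` there are `α, β, γ₁, …, γₙ` in `S` with
(i) `α, β` agree off `a` but differ at `a`, (ii) `a` is in the range of each `γᵢ`, and
(iii) for every `s ∈ S` and `x ≠ s(a)` some `γᵢ` has range disjoint from `s⁻¹(x)`,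
then the Zariski topology on `S` coincides with the topology of pointwise convergence. -/
theorem stmt11 {X : Type*} [Infinite X] (S : Submonoid (Function.End X))
    (H : ∀ a : X, ∃ (n : ℕ) (α β : ↥S) (γ : Fin n → ↥S),
      (∀ x : X, x ≠ a → (α.1 : X → X) x = (β.1 : X → X) x) ∧
      (α.1 : X → X) a ≠ (β.1 : X → X) a ∧
      (∀ i, a ∈ Set.range ((γ i).1 : X → X)) ∧
      (∀ (s : ↥S) (x : X), x ≠ (s.1 : X → X) a →
        ∃ i, Set.range ((γ i).1 : X → X) ∩ (s.1 : X → X) ⁻¹' {x} = ∅)) :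
    zariskiTopology ↥S =
      TopologicalSpace.induced (fun s : ↥S => (s.1 : X → X)) (pwTop X) := by
  letI : TopologicalSpace X := ⊥
  haveI : DiscreteTopology X := ⟨rfl⟩
  -- ### Direction 1: every pointwise-subbasic set {s | s a = b} is Zariski open.
  have fiber_open : ∀ a b : X,
      @IsOpen ↥S (zariskiTopology ↥S) {s : ↥S | (s.1 : X → X) a = b} := by
    intro a b
    letI : TopologicalSpace ↥S := zariskiTopology ↥S
    obtain ⟨n, α, β, γ, hi, hii, hγ, hiii⟩ := H a
    obtain ⟨m, α', β', γ', hi', hii', hγ', hiii'⟩ := H b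
    have key : {s : ↥S | (s.1 : X → X) a = b}
        = ⋂ i : Fin n, {t : ↥S | wordEval t (γ i) [α'] ≠ wordEval t (γ i) [β']} := by
      ext t
      simp only [Set.mem_setOf_eq, Set.mem_iInter]
      constructor
      · intro h i heq
        obtain ⟨y, hy⟩ := hγ i
        have h2 := congrArg (fun u : ↥S => (u.1 : X → X) y) heq
        have e1 : (fun u : ↥S => (u.1 : X → X) y) (wordEval t (γ i) [α'])
            = (α'.1 : X → X) ((t.1 : X → X) (((γ i).1 : X → X) y)) := rfl
        have e2 : (fun u : ↥S => (u.1 : X → X) y) (wordEval t (γ i) [β'])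
            = (β'.1 : X → X) ((t.1 : X → X) (((γ i).1 : X → X) y)) := rfl
        change (fun u : ↥S => (u.1 : X → X) y) (wordEval t (γ i) [α'])
            = (fun u : ↥S => (u.1 : X → X) y) (wordEval t (γ i) [β']) at h2
        rw [e1, e2, hy, h] at h2
        exact hii' h2
      · intro h
        by_contra hne
        obtain ⟨i, hdisj⟩ := hiii t b (fun hb => hne hb.symm)
        have hne1 : (wordEval t (γ i) [α']).1 ≠ (wordEval t (γ i) [β']).1 :=
          fun hh => h i (Subtype.ext hh)
        obtain ⟨y, hy⟩ := Function.ne_iff.mp hne1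
        have e1 : (wordEval t (γ i) [α']).1 y
            = (α'.1 : X → X) ((t.1 : X → X) (((γ i).1 : X → X) y)) := rfl
        have e2 : (wordEval t (γ i) [β']).1 y
            = (β'.1 : X → X) ((t.1 : X → X) (((γ i).1 : X → X) y)) := rfl
        rw [e1, e2] at hy
        have hb : (t.1 : X → X) (((γ i).1 : X → X) y) = b := by
          by_contra hxb
          exact hy (hi' _ hxb)
        have hmem : ((γ i).1 : X → X) y ∈
            Set.range ((γ i).1 : X → X) ∩ (t.1 : X → X) ⁻¹' {b} :=
          ⟨⟨y, rfl⟩, hb⟩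
        rw [hdisj] at hmem
        exact hmem
    rw [key]
    exact isOpen_iInter_of_finite fun i =>
      TopologicalSpace.isOpen_generateFrom_of_mem ⟨γ i, [α'], γ i, [β'], rfl⟩
  have dir1 : zariskiTopology ↥S ≤
      TopologicalSpace.induced (fun s : ↥S => (s.1 : X → X)) (pwTop X) := by
    letI : TopologicalSpace ↥S := zariskiTopology ↥S
    have hc : Continuous (fun (s : ↥S) (x : X) => (s.1 : X → X) x) :=
      continuous_pi fun x => continuous_discrete_rng.mpr fun y => fiber_open x y
    exact continuous_iff_le_induced.mp hc
  -- ### Direction 2: every Zariski generator is open in the induced pointwise topology.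
  have dir2 : TopologicalSpace.induced (fun s : ↥S => (s.1 : X → X)) (pwTop X) ≤
      zariskiTopology ↥S := by
    letI : TopologicalSpace ↥S :=
      TopologicalSpace.induced (fun (s : ↥S) (x : X) => (s.1 : X → X) x) Pi.topologicalSpace
    have hcoe : Continuous (fun (s : ↥S) (x : X) => (s.1 : X → X) x) :=
      continuous_induced_dom
    have ev_cont : ∀ z : X, Continuous (fun s : ↥S => (s.1 : X → X) z) :=
      fun z => (continuous_apply z).comp hcoe
    have apply_cont : ∀ g : ↥S → X, Continuous g →
        Continuous (fun s : ↥S => (s.1 : X → X) (g s)) := by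
      intro g hg
      rw [continuous_discrete_rng]
      intro y
      have hset : (fun s : ↥S => (s.1 : X → X) (g s)) ⁻¹' {y}
          = ⋃ z : X, (g ⁻¹' {z}) ∩ ((fun s : ↥S => (s.1 : X → X) z) ⁻¹' {y}) := by
        ext s
        simp only [Set.mem_preimage, Set.mem_singleton_iff, Set.mem_iUnion, Set.mem_inter_iff]
        constructor
        · intro hs; exact ⟨g s, rfl, hs⟩
        · rintro ⟨z, hz, hs⟩; rw [hz]; exact hs
      rw [hset]
      exact isOpen_iUnion fun z =>
        ((isOpen_discrete _).preimage hg).inter ((isOpen_discrete _).preimage (ev_cont z))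
    have word_cont : ∀ (ps : List ↥S) (p₀ : ↥S) (x : X),
        Continuous (fun s : ↥S => ((wordEval s p₀ ps).1 : X → X) x) := by
      intro ps
      induction ps using List.reverseRecOn with
      | nil =>
        intro p₀ x
        have e : (fun s : ↥S => ((wordEval s p₀ []).1 : X → X) x)
            = fun _ : ↥S => (p₀.1 : X → X) x := rfl
        rw [e]
        exact continuous_const
      | append_singleton ps q ih =>
        intro p₀ x
        have e : (fun s : ↥S => ((wordEval s p₀ (ps ++ [q])).1 : X → X) x)
            = fun s : ↥S => (q.1 : X → X)
                ((s.1 : X → X) (((wordEval s p₀ ps).1 : X → X) x)) := by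
          funext s
          simp only [wordEval, List.foldl_append, List.foldl_cons, List.foldl_nil]
          rfl
        rw [e]
        exact continuous_of_discreteTopology.comp (apply_cont _ (ih p₀ x))
    have gen_open : ∀ M ∈ { M : Set ↥S | ∃ (p₀ : ↥S) (ps : List ↥S) (q₀ : ↥S) (qs : List ↥S),
          M = { s : ↥S | wordEval s p₀ ps ≠ wordEval s q₀ qs } }, IsOpen M := by
      rintro M ⟨p₀, ps, q₀, qs, rfl⟩
      have hset : { s : ↥S | wordEval s p₀ ps ≠ wordEval s q₀ qs }
          = ⋃ x : X, {s : ↥S | ((wordEval s p₀ ps).1 : X → X) x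
              ≠ ((wordEval s q₀ qs).1 : X → X) x} := by
        ext s
        simp only [Set.mem_setOf_eq, Set.mem_iUnion]
        constructor
        · intro hne
          have h1 : (wordEval s p₀ ps).1 ≠ (wordEval s q₀ qs).1 :=
            fun hh => hne (Subtype.ext hh)
          exact Function.ne_iff.mp h1
        · rintro ⟨x, hx⟩ heq
          exact hx (congrArg (fun u : ↥S => (u.1 : X → X) x) heq)
      rw [hset]
      exact isOpen_iUnion fun x =>
        (isClosed_eq (word_cont ps p₀ x) (word_cont qs q₀ x)).isOpen_compl
    exact le_generateFrom gen_open
  exact le_antisymm dir1 dir2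
end

section
/- The Zariski topology on the monoid End(𝔾) is not Hausdorff; specifically, any Zariski-open set containing id_ℕ ⋉ c_{+1} and any Zariski-open set containing id_ℕ ⋉ c_{−1} have nonempty intersection. -/
/-- The vertex set of the complete bipartite graph `K_{2,ω}`: two disjoint countably
infinite parts, `A₊ = Sum.inl ℕ` and `A₋ = Sum.inr ℕ`. -/
abbrev Kdom : Type := ℕ ⊕ ℕ

/-- The edge relation of `K_{2,ω}`: two vertices are adjacent iff they lie in
different parts. -/
def Kedge (x y : Kdom) : Prop := x.isLeft ≠ y.isLeft

/-- Endomorphisms of `K_{2,ω}`: edge-preserving self-maps. -/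
def KEnd (f : Kdom → Kdom) : Prop := ∀ x y, Kedge x y → Kedge (f x) (f y)

/-- Automorphisms of `K_{2,ω}`: edge-preserving-and-reflecting bijections. -/
def KAut (f : Kdom → Kdom) : Prop :=
  Function.Bijective f ∧ ∀ x y, Kedge x y ↔ Kedge (f x) (f y)

/-- The domain of the structure `𝔾`: countably many copies of `K_{2,ω}`. -/
abbrev Gdom : Type := ℕ × Kdom

/-- `E₁((i,x),(j,y))` iff `i ≠ j`. -/
def E1 (a b : Gdom) : Prop := a.1 ≠ b.1

/-- `E₂((i,x),(j,y))` iff `i = j` and `x`, `y` are adjacent in `K_{2,ω}`. -/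
def E2 (a b : Gdom) : Prop := a.1 = b.1 ∧ Kedge a.2 b.2

/-- Endomorphisms of `𝔾`: maps preserving `E₁` and `E₂`. -/
def GEnd (f : Gdom → Gdom) : Prop :=
  (∀ a b, E1 a b → E1 (f a) (f b)) ∧ (∀ a b, E2 a b → E2 (f a) (f b))

/-- Automorphisms of `𝔾`: bijections preserving and reflecting `E₁` and `E₂`. -/
def GAut (f : Gdom → Gdom) : Prop :=
  Function.Bijective f ∧ (∀ a b, E1 a b ↔ E1 (f a) (f b)) ∧
    (∀ a b, E2 a b ↔ E2 (f a) (f b))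

/-- `⊔^τ sᵢ : (i,x) ↦ (τ(i), sᵢ(x))`. -/
def sqcup (τ : ℕ → ℕ) (s : ℕ → Kdom → Kdom) : Gdom → Gdom :=
  fun p => (τ p.1, s p.1 p.2)

/-- The fixed element `a₊₁` of the part `A₊` of `K_{2,ω}`. -/
def aP : Kdom := Sum.inl 0

/-- The fixed element `a₋₁` of the part `A₋` of `K_{2,ω}`. -/
def aM : Kdom := Sum.inr 0

/-- `c₊₁`: the endomorphism of `K_{2,ω}` sending all of `A₊` to `a₊₁` and all of
`A₋` to `a₋₁` (sign `+1`). -/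
def cplus : Kdom → Kdom := Sum.elim (fun _ => aP) (fun _ => aM)

/-- `c₋₁`: the endomorphism of `K_{2,ω}` sending all of `A₊` to `a₋₁` and all of
`A₋` to `a₊₁` (sign `-1`). -/
def cminus : Kdom → Kdom := Sum.elim (fun _ => aM) (fun _ => aP)

/-- `τ ⋉ s : (i,x) ↦ (τ(i), s(x))`. -/
def ltimes (τ : ℕ → ℕ) (s : Kdom → Kdom) : Gdom → Gdom :=
  fun p => (τ p.1, s p.2)

/-- `End(𝔾)` as a submonoid of `Function.End Gdom`. -/
def endG : Submonoid (Function.End Gdom) where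
  carrier := {f | GEnd f}
  one_mem' := ⟨fun _ _ h => h, fun _ _ h => h⟩
  mul_mem' := fun {_ _} hf hg =>
    ⟨fun a b h => hf.1 _ _ (hg.1 a b h), fun a b h => hf.2 _ _ (hg.2 a b h)⟩

lemma KEnd_cplus : KEnd cplus := by
  intro x y h
  cases x <;> cases y <;> simp_all [Kedge, cplus, aP, aM]

lemma KEnd_cminus : KEnd cminus := by
  intro x y h
  cases x <;> cases y <;> simp_all [Kedge, cminus, aP, aM]

lemma GEnd_ltimes_cplus : GEnd (ltimes id cplus) :=
  ⟨fun _ _ h => h, fun _ _ h => ⟨h.1, KEnd_cplus _ _ h.2⟩⟩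

lemma GEnd_ltimes_cminus : GEnd (ltimes id cminus) :=
  ⟨fun _ _ h => h, fun _ _ h => ⟨h.1, KEnd_cminus _ _ h.2⟩⟩

/-- `id ⋉ c₊₁` as an element of `End(𝔾)`. -/
def idCplus : ↥endG := ⟨ltimes id cplus, GEnd_ltimes_cplus⟩

/-- `id ⋉ c₋₁` as an element of `End(𝔾)`. -/
def idCminus : ↥endG := ⟨ltimes id cminus, GEnd_ltimes_cminus⟩

/-! ### Auxiliary development -/

open Classical in
noncomputable instance : DecidableEq (Set ↥endG) := fun _ _ => Classical.propDecidable _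

/-- point of `Kdom` in part `b` (`true` = left part). -/
def ab (b : Bool) : Kdom := if b then aP else aM

@[simp] lemma ab_isLeft (b : Bool) : (ab b).isLeft = b := by cases b <;> rfl

/-- the constant-per-part map of sign `b`. -/
def cb (b : Bool) : Kdom → Kdom := fun x => if x.isLeft == b then aP else aM

lemma cb_ab (b : Bool) (y : Kdom) : cb b y = ab (y.isLeft == b) := rfl

lemma cb_true : cb true = cplus := by
  funext x; cases x <;> rfl

lemma cb_false : cb false = cminus := by
  funext x; cases x <;> rfl

/-- the element `id ⋉ (c_{ε i})_i` as a plain function. -/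
def tE (ε : ℕ → Bool) : Gdom → Gdom := fun p => (p.1, cb (ε p.1) p.2)

lemma GEnd_tE (ε : ℕ → Bool) : GEnd (tE ε) := by
  refine ⟨fun a b h => h, fun a b h => ⟨h.1, ?_⟩⟩
  have h1 : a.1 = b.1 := h.1
  have h2 : a.2.isLeft ≠ b.2.isLeft := h.2
  show (cb (ε a.1) a.2).isLeft ≠ (cb (ε b.1) b.2).isLeft
  rw [h1, cb_ab, cb_ab, ab_isLeft, ab_isLeft]
  revert h2
  cases a.2.isLeft <;> cases b.2.isLeft <;> cases ε b.1 <;> simp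

/-- the element `id ⋉ (c_{ε i})_i` in `End(𝔾)`. -/
def tEE (ε : ℕ → Bool) : ↥endG := ⟨tE ε, GEnd_tE ε⟩

lemma tEE_one : tEE (fun _ => true) = idCplus := by
  apply Subtype.ext
  funext p
  obtain ⟨i, x⟩ := p
  cases x <;> rfl

lemma tEE_zero : tEE (fun _ => false) = idCminus := by
  apply Subtype.ext
  funext p
  obtain ⟨i, x⟩ := p
  cases x <;> rfl

/-- copy map of an endomorphism of `𝔾`. -/
def tau (f : ↥endG) (i : ℕ) : ℕ := (f.val (i, aP)).1

/-- sign of the `i`-th component of an endomorphism of `𝔾`. -/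
def sgn (f : ↥endG) (i : ℕ) : Bool := ((f.val (i, aP)).2).isLeft

lemma fst_eq (f : ↥endG) (i : ℕ) (x : Kdom) : (f.val (i, x)).1 = tau f i := by
  have hf := f.2.2
  cases x with
  | inl n =>
      have h1 := hf (i, Sum.inl n) (i, aM) ⟨rfl, by simp [Kedge, aM]⟩
      have h2 := hf (i, aP) (i, aM) ⟨rfl, by simp [Kedge, aP, aM]⟩
      exact h1.1.trans h2.1.symm
  | inr n =>
      exact (hf (i, Sum.inr n) (i, aP) ⟨rfl, by simp [Kedge, aP]⟩).1

lemma snd_isLeft (f : ↥endG) (i : ℕ) (x : Kdom) :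
    ((f.val (i, x)).2).isLeft = (x.isLeft == sgn f i) := by
  have hf := f.2.2
  cases x with
  | inl n =>
      have h1 := (hf (i, Sum.inl n) (i, aM) ⟨rfl, by simp [Kedge, aM]⟩).2
      have h2 := (hf (i, aP) (i, aM) ⟨rfl, by simp [Kedge, aP, aM]⟩).2
      simp only [Kedge] at h1 h2
      show _ = (true == sgn f i)
      unfold sgn
      revert h1 h2
      cases ((f.val (i, Sum.inl n)).2).isLeft <;>
        cases ((f.val (i, aM)).2).isLeft <;>
        cases ((f.val (i, aP)).2).isLeft <;> simp
  | inr n =>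
      have h1 := (hf (i, Sum.inr n) (i, aP) ⟨rfl, by simp [Kedge, aP]⟩).2
      simp only [Kedge] at h1
      show _ = (false == sgn f i)
      unfold sgn
      revert h1
      cases ((f.val (i, Sum.inr n)).2).isLeft <;>
        cases ((f.val (i, aP)).2).isLeft <;> simp

lemma tau_inj (f : ↥endG) : Function.Injective (tau f) := by
  intro i j h
  by_contra hne
  exact f.2.1 (i, aP) (j, aP) hne h

lemma endG_mul_apply (f g : ↥endG) (a : Gdom) : ((f * g) : ↥endG).val a = f.val (g.val a) := rfl
lemma wordEval_cons {S : Type*} [Monoid S] (s p₀ q : S) (qs : List S) :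
    wordEval s p₀ (q :: qs) = wordEval s q qs * s * p₀ := by
  suffices h : ∀ (qs : List S) (q p₀ : S),
      List.foldl (fun acc x => x * s * acc) (q * s * p₀) qs =
      List.foldl (fun acc x => x * s * acc) q qs * s * p₀ by
    exact h qs q p₀
  intro qs
  induction qs with
  | nil => intro q p₀; rfl
  | cons a l ih =>
      intro q p₀
      simp only [List.foldl_cons]
      rw [show a * s * (q * s * p₀) = (a * s * q) * s * p₀ by simp [mul_assoc], ih (a * s * q) p₀]

@[simp] lemma wordEval_nil {S : Type*} [Monoid S] (s p₀ : S) : wordEval s p₀ [] = p₀ := rfl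

/-- evaluation of a word at `tEE ε`, on points `(i, ab b)`, tracked symbolically. -/
def Ev : ↥endG → List ↥endG → ℕ → Bool → (ℕ → Bool) → Gdom
  | p₀, [], i, b, _ => p₀.val (i, ab b)
  | p₀, q :: qs, i, b, ε => Ev q qs (tau p₀ i) ((b == sgn p₀ i) == ε (tau p₀ i)) ε

/-- list of copies visited by the trajectory of copy `i` through a word. -/
def trajL : ↥endG → List ↥endG → ℕ → List ℕ
  | _, [], _ => []
  | p₀, q :: qs, i => tau p₀ i :: trajL q qs (tau p₀ i)

/-- parity (as xnor-product) of `ε` along the trajectory of copy `i`. -/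
def par : ↥endG → List ↥endG → ℕ → (ℕ → Bool) → Bool
  | _, [], _, _ => true
  | p₀, q :: qs, i, ε => ε (tau p₀ i) == par q qs (tau p₀ i) ε

lemma tEE_step (ε : ℕ → Bool) (p₀ : ↥endG) (i : ℕ) (x : Kdom) :
    (tEE ε).val (p₀.val (i, x)) =
      (tau p₀ i, ab ((x.isLeft == sgn p₀ i) == ε (tau p₀ i))) := by
  show (_, cb _ _) = _
  rw [cb_ab, snd_isLeft, fst_eq]

lemma Ev_correct_ab (ε : ℕ → Bool) :
    ∀ (qs : List ↥endG) (q : ↥endG) (i : ℕ) (b : Bool),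
      (wordEval (tEE ε) q qs).val (i, ab b) = Ev q qs i b ε := by
  intro qs
  induction qs with
  | nil => intro q i b; rfl
  | cons q' qs' ih =>
      intro q i b
      rw [wordEval_cons]
      show (wordEval (tEE ε) q' qs').val ((tEE ε).val (q.val (i, ab b))) = _
      rw [tEE_step, ab_isLeft]
      exact ih q' (tau q i) ((b == sgn q i) == ε (tau q i))

lemma Wv_cons (ε : ℕ → Bool) (p₀ q : ↥endG) (qs : List ↥endG) (i : ℕ) (x : Kdom) :
    (wordEval (tEE ε) p₀ (q :: qs)).val (i, x) =
      Ev q qs (tau p₀ i) ((x.isLeft == sgn p₀ i) == ε (tau p₀ i)) ε := by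
  rw [wordEval_cons]
  show (wordEval (tEE ε) q qs).val ((tEE ε).val (p₀.val (i, x))) = _
  rw [tEE_step]
  exact Ev_correct_ab ε qs q (tau p₀ i) _
section BoolHelpers

lemma bool_inv_step : ∀ b b' s e e' P P' : Bool,
    ((b == b') = ((e == P) == (e' == P'))) →
    (((b == s) == e) == ((b' == s) == e')) = (P == P') := by decide

lemma bool_cancel_step : ∀ b b' s e : Bool,
    (((b == s) == e) = ((b' == s) == e)) → b = b' := by decide

lemma bool_cancel_base : ∀ b b' s : Bool, ((b == s) = (b' == s)) → b = b' := by decide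

lemma bool_flip_step : ∀ a e P : Bool,
    ((!a) == ((!e) == P)) = ((!(e)).not == (a == P)) := by decide

end BoolHelpers

lemma Ev_inv : ∀ (ps : List ↥endG) (p₀ : ↥endG) (i : ℕ) (b b' : Bool) (ε ε' : ℕ → Bool),
    ((b == b') = (par p₀ ps i ε == par p₀ ps i ε')) →
    Ev p₀ ps i b ε = Ev p₀ ps i b' ε' := by
  intro ps
  induction ps with
  | nil =>
      intro p₀ i b b' ε ε' h
      have : b = b' := by
        have h' : (b == b') = true := by simpa [par] using h
        simpa using h'
      rw [this]; rfl
  | cons q qs ih =>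
      intro p₀ i b b' ε ε' h
      show Ev q qs (tau p₀ i) _ ε = Ev q qs (tau p₀ i) _ ε'
      exact ih q (tau p₀ i) _ _ ε ε'
        (bool_inv_step b b' (sgn p₀ i) (ε (tau p₀ i)) (ε' (tau p₀ i)) _ _ (by simpa [par] using h))

lemma Ev_inj_b : ∀ (ps : List ↥endG) (p₀ : ↥endG) (i : ℕ) (b b' : Bool) (ε : ℕ → Bool),
    Ev p₀ ps i b ε = Ev p₀ ps i b' ε → b = b' := by
  intro ps
  induction ps with
  | nil =>
      intro p₀ i b b' ε h
      have h2 := congrArg (fun z : Gdom => z.2.isLeft) h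
      simp only [Ev] at h2
      rw [snd_isLeft, snd_isLeft, ab_isLeft, ab_isLeft] at h2
      exact bool_cancel_base b b' (sgn p₀ i) h2
  | cons q qs ih =>
      intro p₀ i b b' ε h
      exact bool_cancel_step b b' (sgn p₀ i) (ε (tau p₀ i))
        (ih q (tau p₀ i) _ _ ε h)

lemma Ev_support : ∀ (ps : List ↥endG) (p₀ : ↥endG) (i : ℕ) (b : Bool) (ε ε' : ℕ → Bool),
    (∀ j ∈ trajL p₀ ps i, ε j = ε' j) →
    Ev p₀ ps i b ε = Ev p₀ ps i b ε' := by
  intro ps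
  induction ps with
  | nil => intro _ _ _ _ _ _; rfl
  | cons q qs ih =>
      intro p₀ i b ε ε' h
      show Ev q qs (tau p₀ i) _ ε = Ev q qs (tau p₀ i) _ ε'
      rw [h (tau p₀ i) (by simp [trajL])]
      exact ih q (tau p₀ i) _ ε ε' (fun j hj => h j (by simp [trajL, hj]))

lemma par_support : ∀ (ps : List ↥endG) (p₀ : ↥endG) (i : ℕ) (ε ε' : ℕ → Bool),
    (∀ j ∈ trajL p₀ ps i, ε j = ε' j) →
    par p₀ ps i ε = par p₀ ps i ε' := by
  intro ps
  induction ps with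
  | nil => intro _ _ _ _ _; rfl
  | cons q qs ih =>
      intro p₀ i ε ε' h
      show (ε (tau p₀ i) == par q qs (tau p₀ i) ε) =
        (ε' (tau p₀ i) == par q qs (tau p₀ i) ε')
      rw [h (tau p₀ i) (by simp [trajL]),
        ih q (tau p₀ i) ε ε' (fun j hj => h j (by simp [trajL, hj]))]

lemma par_one : ∀ (ps : List ↥endG) (p₀ : ↥endG) (i : ℕ),
    par p₀ ps i (fun _ => true) = true := by
  intro ps
  induction ps with
  | nil => intro _ _; rfl
  | cons q qs ih =>
      intro p₀ i
      show (true == par q qs (tau p₀ i) (fun _ => true)) = true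
      rw [ih q (tau p₀ i)]; rfl

lemma par_flip : ∀ (ps : List ↥endG) (p₀ : ↥endG) (i : ℕ) (ε ε' : ℕ → Bool) (L : List ℕ),
    (∀ j ∈ trajL p₀ ps i, j ∈ L) → (∀ j ∈ L, ε' j = !ε j) →
    par p₀ ps i ε' = ((!ps.length.bodd) == par p₀ ps i ε) := by
  intro ps
  induction ps with
  | nil => intro _ _ _ _ _ _ _; rfl
  | cons q qs ih =>
      intro p₀ i ε ε' L hsub hflip
      show (ε' (tau p₀ i) == par q qs (tau p₀ i) ε') =
        ((!(qs.length + 1).bodd) == (ε (tau p₀ i) == par q qs (tau p₀ i) ε))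
      rw [hflip (tau p₀ i) (hsub _ (by simp [trajL])),
        ih q (tau p₀ i) ε ε' L (fun j hj => hsub j (by simp [trajL, hj])) hflip,
        Nat.bodd_succ]
      generalize ε (tau p₀ i) = a
      generalize qs.length.bodd = e
      generalize par q qs (tau p₀ i) ε = P
      revert a e P
      decide
/-- A subbasic constraint: a pair of words. -/
structure ZCon where
  p0 : ↥endG
  ps : List ↥endG
  q0 : ↥endG
  qs : List ↥endG

instance : Inhabited ZCon := ⟨⟨1, [], 1, []⟩⟩

/-- the subbasic Zariski-open set attached to a constraint. -/
def Mset (C : ZCon) : Set ↥endG :=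
  { s : ↥endG | wordEval s C.p0 C.ps ≠ wordEval s C.q0 C.qs }

/-- the two word values differ at copy `i` when evaluated at `tEE ε`. -/
def SATat (C : ZCon) (i : ℕ) (ε : ℕ → Bool) : Prop :=
  ∃ x : Kdom, (wordEval (tEE ε) C.p0 C.ps).val (i, x) ≠ (wordEval (tEE ε) C.q0 C.qs).val (i, x)

/-- the combined trajectory list of a constraint at copy `i`. -/
def trajLC (C : ZCon) (i : ℕ) : List ℕ := trajL C.p0 C.ps i ++ trajL C.q0 C.qs i

/-- flip a boolean assignment on a list of coordinates. -/
def flipOn (L : List ℕ) (ε : ℕ → Bool) : ℕ → Bool :=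
  fun j => if j ∈ L then !ε j else ε j

lemma SATat_mem (C : ZCon) (i : ℕ) (ε : ℕ → Bool) (h : SATat C i ε) : tEE ε ∈ Mset C := by
  obtain ⟨x, hx⟩ := h
  intro hEq
  exact hx (congrFun (congrArg Subtype.val hEq) (i, x))

lemma Wv_support (ε ε' : ℕ → Bool) (p₀ : ↥endG) (ps : List ↥endG) (i : ℕ) (x : Kdom)
    (h : ∀ j ∈ trajL p₀ ps i, ε j = ε' j) :
    (wordEval (tEE ε) p₀ ps).val (i, x) = (wordEval (tEE ε') p₀ ps).val (i, x) := by
  cases ps with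
  | nil => rfl
  | cons q qs =>
      rw [Wv_cons, Wv_cons, h (tau p₀ i) (by simp [trajL])]
      exact Ev_support qs q (tau p₀ i) _ ε ε' (fun j hj => h j (by simp [trajL, hj]))

lemma SATat_support (C : ZCon) (i : ℕ) (ε ε' : ℕ → Bool)
    (h : ∀ j ∈ trajLC C i, ε j = ε' j) (hs : SATat C i ε) : SATat C i ε' := by
  obtain ⟨x, hx⟩ := hs
  refine ⟨x, ?_⟩
  rw [← Wv_support ε ε' C.p0 C.ps i x (fun j hj => h j (by simp [trajLC, hj])),
    ← Wv_support ε ε' C.q0 C.qs i x (fun j hj => h j (by simp [trajLC, hj]))]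
  exact hx
section TransferHelpers

lemma bool_tt : ∀ a b : Bool, ((a == true) = (b == true)) → a = b := by decide

lemma bool_mixed : ∀ c s e eh P Ph : Bool, ((e == P) = (eh == Ph)) →
    (((c == s) == e) == ((c == s) == eh)) = (P == Ph) := by decide

lemma bool_consA : ∀ c s e eh P Ph : Bool,
    ((((c == ((e == P) == (eh == Ph))) == s) == e) == ((c == s) == eh)) = (P == Ph) := by
  decide

lemma bool_consB : ∀ c s f fh Q Qh e eh P Ph : Bool,
    (((e == P) == (f == Q)) = ((eh == Ph) == (fh == Qh))) →
    ((((c == ((e == P) == (eh == Ph))) == s) == f) == ((c == s) == fh)) = (Q == Qh) := by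
  decide

lemma xswap (y : Kdom) (δ : Bool) : (if δ then y else y.swap).isLeft = (y.isLeft == δ) := by
  cases y <;> cases δ <;> rfl

end TransferHelpers

lemma transfer (C : ZCon) (εh ε : ℕ → Bool) (a : Gdom)
    (hne : (wordEval (tEE εh) C.p0 C.ps).val a ≠ (wordEval (tEE εh) C.q0 C.qs).val a)
    (hpar : (par C.p0 C.ps a.1 ε == par C.q0 C.qs a.1 ε)
          = (par C.p0 C.ps a.1 εh == par C.q0 C.qs a.1 εh)) :
    SATat C a.1 ε := by
  obtain ⟨p₀, ps, q₀, qs⟩ := C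
  obtain ⟨i, x₀⟩ := a
  simp only [SATat] at *
  cases ps with
  | nil =>
      cases qs with
      | nil => exact ⟨x₀, hne⟩
      | cons qq qs₁ =>
          -- mixed : left word is a constant
          simp only [par] at hpar
          have hp : (ε (tau q₀ i) == par qq qs₁ (tau q₀ i) ε)
              = (εh (tau q₀ i) == par qq qs₁ (tau q₀ i) εh) :=
            bool_tt _ _ (by
              revert hpar
              generalize (ε (tau q₀ i) == par qq qs₁ (tau q₀ i) ε) = A
              generalize (εh (tau q₀ i) == par qq qs₁ (tau q₀ i) εh) = B
              revert A B
              decide)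
          refine ⟨x₀, ?_⟩
          rw [wordEval_nil] at hne ⊢
          rw [Wv_cons] at hne ⊢
          rw [Ev_inv qs₁ qq (tau q₀ i) _ _ ε εh
            (bool_mixed x₀.isLeft (sgn q₀ i) (ε (tau q₀ i)) (εh (tau q₀ i)) _ _ hp)]
          exact hne
  | cons pq ps₁ =>
      cases qs with
      | nil =>
          simp only [par] at hpar
          have hp : (ε (tau p₀ i) == par pq ps₁ (tau p₀ i) ε)
              = (εh (tau p₀ i) == par pq ps₁ (tau p₀ i) εh) :=
            bool_tt _ _ hpar
          refine ⟨x₀, ?_⟩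
          rw [wordEval_nil] at hne ⊢
          rw [Wv_cons] at hne ⊢
          rw [Ev_inv ps₁ pq (tau p₀ i) _ _ ε εh
            (bool_mixed x₀.isLeft (sgn p₀ i) (ε (tau p₀ i)) (εh (tau p₀ i)) _ _ hp)]
          exact hne
      | cons qq qs₁ =>
          simp only [par] at hpar
          set jφ := tau p₀ i
          set jψ := tau q₀ i
          set Pε := par pq ps₁ jφ ε
          set Pεh := par pq ps₁ jφ εh
          set Qε := par qq qs₁ jψ ε
          set Qεh := par qq qs₁ jψ εh
          set δ := ((ε jφ == Pε) == (εh jφ == Pεh)) with hδ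
          refine ⟨if δ then x₀ else x₀.swap, ?_⟩
          rw [Wv_cons, Wv_cons, xswap x₀ δ, hδ]
          rw [Ev_inv ps₁ pq jφ _ _ ε εh
            (bool_consA x₀.isLeft (sgn p₀ i) (ε jφ) (εh jφ) Pε Pεh)]
          rw [Ev_inv qs₁ qq jψ _ _ ε εh
            (bool_consB x₀.isLeft (sgn q₀ i) (ε jψ) (εh jψ) Qε Qεh (ε jφ) (εh jφ) Pε Pεh hpar)]
          rw [Wv_cons, Wv_cons] at hne
          exact hne

lemma Ev_par_eq (ps : List ↥endG) (p₀ : ↥endG) (i : ℕ) (ε ε' : ℕ → Bool)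
    (hpeq : par p₀ ps i ε = par p₀ ps i ε') (b : Bool) :
    Ev p₀ ps i b ε = Ev p₀ ps i b ε' :=
  Ev_inv ps p₀ i b b ε ε' (by rw [hpeq]; simp)
section OddHelpers

lemma flipOn_mem {L : List ℕ} {j : ℕ} (ε : ℕ → Bool) (h : j ∈ L) : flipOn L ε j = !ε j := by
  simp [flipOn, h]

lemma bool_selfz : ∀ B z P : Bool, (B == (B == z)) = (((z == P) == P)) := by decide

lemma bool_mix2 : ∀ s e : Bool, (((true == s) == e) = ((true == s) == (!e))) → False := by
  decide

lemma bool_neqnot : ∀ b : Bool, b ≠ !b := by decide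

lemma bool_oddsum : ∀ a b : Bool, (((!a).xor (!b)) = true) → b = !a := by decide

lemma bool_c1 : ∀ s e : Bool, (((s == e) == s) == e) = true := by decide

lemma bool_c2 : ∀ s e o : Bool, (((((s == !e) == !o) == s) == (!e)) == !o) = true := by decide

lemma bool_c3 : ∀ s t e f o : Bool,
    (((((s == !e) == !o) == t) == (!f)) == (!(!o))) = (!(((s == e) == t) == f)) := by decide

end OddHelpers

lemma odd_sat (C : ZCon) (hodd : (C.ps.length + C.qs.length).bodd = true) (i : ℕ)
    (ε : ℕ → Bool) :
    SATat C i ε ∨ SATat C i (flipOn (trajLC C i) ε) := by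
  by_contra hcon
  push_neg at hcon
  obtain ⟨hs1, hs2⟩ := hcon
  obtain ⟨p₀, ps, q₀, qs⟩ := C
  simp only [SATat, not_exists, not_not, ne_eq] at hs1 hs2
  set ε' := flipOn (trajLC ⟨p₀, ps, q₀, qs⟩ i) ε with hε'
  cases ps with
  | nil =>
      cases qs with
      | nil => simp at hodd
      | cons qq qs₁ =>
          -- left word constant, right word has odd length
          set jψ := tau q₀ i with hjψ
          have hmem : jψ ∈ trajLC ⟨p₀, [], q₀, qq :: qs₁⟩ i := by simp [trajLC, trajL, hjψ]
          have hflip : ∀ j ∈ trajLC ⟨p₀, [], q₀, qq :: qs₁⟩ i, ε' j = !ε j :=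
            fun j hj => flipOn_mem ε hj
          have hsub : ∀ j ∈ trajL qq qs₁ jψ, j ∈ trajLC ⟨p₀, [], q₀, qq :: qs₁⟩ i := by
            intro j hj; simp [trajLC, trajL]; tauto
          have hp1 := par_flip qs₁ qq jψ ε ε' _ hsub hflip
          have hoz : qs₁.length.bodd = false := by
            simp only [List.length_cons, List.length_nil, Nat.zero_add, Nat.bodd_succ] at hodd
            simpa using hodd
          rw [hoz] at hp1
          have hpeq : par qq qs₁ jψ ε' = par qq qs₁ jψ ε := by rw [hp1]; simp
          have hA := hs1 (ab true)
          have hB := hs2 (ab true)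
          rw [wordEval_nil, Wv_cons, ab_isLeft] at hA hB
          rw [← hjψ] at hA hB
          rw [hflip jψ hmem] at hB
          rw [Ev_par_eq qs₁ qq jψ ε' ε hpeq] at hB
          exact bool_mix2 _ _ (Ev_inj_b qs₁ qq jψ _ _ ε (hA.symm.trans hB))
  | cons pq ps₁ =>
      cases qs with
      | nil =>
          set jφ := tau p₀ i with hjφ
          have hmem : jφ ∈ trajLC ⟨p₀, pq :: ps₁, q₀, []⟩ i := by simp [trajLC, trajL, hjφ]
          have hflip : ∀ j ∈ trajLC ⟨p₀, pq :: ps₁, q₀, []⟩ i, ε' j = !ε j :=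
            fun j hj => flipOn_mem ε hj
          have hsub : ∀ j ∈ trajL pq ps₁ jφ, j ∈ trajLC ⟨p₀, pq :: ps₁, q₀, []⟩ i := by
            intro j hj; simp [trajLC, trajL]; tauto
          have hp1 := par_flip ps₁ pq jφ ε ε' _ hsub hflip
          have hoz : ps₁.length.bodd = false := by
            simp only [List.length_cons, List.length_nil, Nat.add_zero, Nat.bodd_succ] at hodd
            simpa using hodd
          rw [hoz] at hp1
          have hpeq : par pq ps₁ jφ ε' = par pq ps₁ jφ ε := by rw [hp1]; simp
          have hA := hs1 (ab true)
          have hB := hs2 (ab true)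
          rw [wordEval_nil, Wv_cons, ab_isLeft] at hA hB
          rw [← hjφ] at hA hB
          rw [hflip jφ hmem] at hB
          rw [Ev_par_eq ps₁ pq jφ ε' ε hpeq] at hB
          exact bool_mix2 _ _ (Ev_inj_b ps₁ pq jφ _ _ ε (hA.trans hB.symm))
      | cons qq qs₁ =>
          set jφ := tau p₀ i with hjφ
          set jψ := tau q₀ i with hjψ
          have hmemφ : jφ ∈ trajLC ⟨p₀, pq :: ps₁, q₀, qq :: qs₁⟩ i := by
            simp [trajLC, trajL, hjφ]
          have hmemψ : jψ ∈ trajLC ⟨p₀, pq :: ps₁, q₀, qq :: qs₁⟩ i := by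
            simp [trajLC, trajL, hjψ]
          have hflip : ∀ j ∈ trajLC ⟨p₀, pq :: ps₁, q₀, qq :: qs₁⟩ i, ε' j = !ε j :=
            fun j hj => flipOn_mem ε hj
          have hsubφ : ∀ j ∈ trajL pq ps₁ jφ, j ∈ trajLC ⟨p₀, pq :: ps₁, q₀, qq :: qs₁⟩ i := by
            intro j hj; simp [trajLC, trajL]; tauto
          have hsubψ : ∀ j ∈ trajL qq qs₁ jψ, j ∈ trajLC ⟨p₀, pq :: ps₁, q₀, qq :: qs₁⟩ i := by
            intro j hj; simp [trajLC, trajL]; tauto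
          have hp1 := par_flip ps₁ pq jφ ε ε' _ hsubφ hflip
          have hp2 := par_flip qs₁ qq jψ ε ε' _ hsubψ hflip
          set oφ := ps₁.length.bodd with hoφ
          set oψ := qs₁.length.bodd with hoψ'
          have hoψ : oψ = !oφ := by
            apply bool_oddsum
            simp only [List.length_cons, Nat.bodd_add, Nat.bodd_succ] at hodd
            rw [← hoφ, ← hoψ'] at hodd
            exact hodd
          -- the two function equalities, at points `ab c`
          have h1c : ∀ c : Bool,
              Ev pq ps₁ jφ ((c == sgn p₀ i) == ε jφ) ε
                = Ev qq qs₁ jψ ((c == sgn q₀ i) == ε jψ) ε := by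
            intro c
            have := hs1 (ab c)
            rwa [Wv_cons, Wv_cons, ab_isLeft, ← hjφ, ← hjψ] at this
          have h2c : ∀ c : Bool,
              Ev pq ps₁ jφ (((c == sgn p₀ i) == (!ε jφ)) == (!oφ)) ε
                = Ev qq qs₁ jψ (((c == sgn q₀ i) == (!ε jψ)) == (!oψ)) ε := by
            intro c
            have := hs2 (ab c)
            rw [Wv_cons, Wv_cons, ab_isLeft, ← hjφ, ← hjψ,
              hflip jφ hmemφ, hflip jψ hmemψ] at this
            rw [Ev_inv ps₁ pq jφ _ _ ε' ε (by rw [hp1]; exact bool_selfz _ _ _)] at this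
            rw [Ev_inv qs₁ qq jψ _ _ ε' ε (by rw [hp2]; exact bool_selfz _ _ _)] at this
            exact this
          have h1' := h1c ((sgn p₀ i == ε jφ))
          rw [bool_c1] at h1'
          have h2' := h2c ((sgn p₀ i == !ε jφ) == !oφ)
          rw [bool_c2, hoψ, bool_c3] at h2'
          exact bool_neqnot _ (Ev_inj_b qs₁ qq jψ _ _ ε (h1'.symm.trans h2'))
lemma traj_meet_finite : ∀ (ps : List ↥endG) (p₀ : ↥endG) (F : Set ℕ), F.Finite →
    {i : ℕ | ∃ j ∈ trajL p₀ ps i, j ∈ F}.Finite := by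
  intro ps
  induction ps with
  | nil =>
      intro p₀ F _
      convert Set.finite_empty using 1
      ext i; simp [trajL]
  | cons q qs ih =>
      intro p₀ F hF
      have hsub : {i : ℕ | ∃ j ∈ trajL p₀ (q :: qs) i, j ∈ F} ⊆
          (tau p₀ ⁻¹' F) ∪ (tau p₀ ⁻¹' {i' : ℕ | ∃ j ∈ trajL q qs i', j ∈ F}) := by
        intro i hi
        obtain ⟨j, hj, hjF⟩ := hi
        simp only [trajL, List.mem_cons] at hj
        rcases hj with h | h
        · left
          show tau p₀ i ∈ F
          exact h ▸ hjF
        · right; exact ⟨j, h, hjF⟩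
      refine Set.Finite.subset (Set.Finite.union ?_ ?_) hsub
      · exact Set.Finite.preimage ((tau_inj p₀).injOn) hF
      · exact Set.Finite.preimage ((tau_inj p₀).injOn) (ih q F hF)

lemma trajC_meet_finite (C : ZCon) (F : Set ℕ) (hF : F.Finite) :
    {i : ℕ | ∃ j ∈ trajLC C i, j ∈ F}.Finite := by
  have hsub : {i : ℕ | ∃ j ∈ trajLC C i, j ∈ F} ⊆
      {i : ℕ | ∃ j ∈ trajL C.p0 C.ps i, j ∈ F} ∪ {i : ℕ | ∃ j ∈ trajL C.q0 C.qs i, j ∈ F} := by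
    intro i hi
    obtain ⟨j, hj, hjF⟩ := hi
    simp only [trajLC, List.mem_append] at hj
    rcases hj with h | h
    · left; exact ⟨j, h, hjF⟩
    · right; exact ⟨j, h, hjF⟩
  exact Set.Finite.subset
    (Set.Finite.union (traj_meet_finite _ _ F hF) (traj_meet_finite _ _ F hF)) hsub

/-- Main recursion: handle a list of odd constraints on fresh disjoint trajectories. -/
lemma main_rec : ∀ (L : List ZCon), (∀ C ∈ L, (C.ps.length + C.qs.length).bodd = true) →
    ∀ (F : Set ℕ), F.Finite → ∀ (ε : ℕ → Bool),
    ∃ (ε' : ℕ → Bool) (G : Set ℕ), G.Finite ∧ (∀ j ∈ G, j ∉ F) ∧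
      (∀ j, j ∉ G → ε' j = ε j) ∧
      (∀ C ∈ L, ∃ i, (∀ j ∈ trajLC C i, j ∈ G) ∧ SATat C i ε') := by
  intro L
  induction L with
  | nil =>
      intro _ F _ ε
      exact ⟨ε, ∅, Set.finite_empty, by simp, fun _ _ => rfl, by simp⟩
  | cons C L' ih =>
      intro hodd F hF ε
      obtain ⟨ε', G', hG'fin, hG'F, hG'agree, hG'sat⟩ :=
        ih (fun C' hC' => hodd C' (List.mem_cons_of_mem C hC')) F hF ε
      -- pick a fresh copy for C
      have hbad : {i : ℕ | ∃ j ∈ trajLC C i, j ∈ F ∪ G'}.Finite :=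
        trajC_meet_finite C (F ∪ G') (hF.union hG'fin)
      obtain ⟨i₀, hi₀⟩ := hbad.infinite_compl.nonempty
      have hfresh : ∀ j ∈ trajLC C i₀, j ∉ F ∧ j ∉ G' := by
        intro j hj
        constructor
        · intro hjF; exact hi₀ ⟨j, hj, Or.inl hjF⟩
        · intro hjG; exact hi₀ ⟨j, hj, Or.inr hjG⟩
      have hoddC := hodd C List.mem_cons_self
      -- decide whether to flip on the fresh trajectory
      have hchoice := odd_sat C hoddC i₀ ε'
      set T := trajLC C i₀ with hT
      have key : ∃ ε'' : ℕ → Bool, SATat C i₀ ε'' ∧ (∀ j, j ∉ {j : ℕ | j ∈ T} → ε'' j = ε' j) := by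
        rcases hchoice with h | h
        · exact ⟨ε', h, fun _ _ => rfl⟩
        · refine ⟨flipOn T ε', h, fun j hj => ?_⟩
          simp only [Set.mem_setOf_eq] at hj
          simp [flipOn, hj]
      obtain ⟨ε'', hsatC, hagree''⟩ := key
      refine ⟨ε'', G' ∪ {j : ℕ | j ∈ T}, hG'fin.union (T.finite_toSet), ?_, ?_, ?_⟩
      · intro j hj
        rcases hj with hj | hj
        · exact hG'F j hj
        · exact (hfresh j hj).1
      · intro j hj
        rw [hagree'' j (fun h => hj (Or.inr h)), hG'agree j (fun h => hj (Or.inl h))]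
      · intro D hD
        rcases List.mem_cons.mp hD with rfl | hD'
        · exact ⟨i₀, fun j hj => Or.inr hj, hsatC⟩
        · obtain ⟨i, hiG, hisat⟩ := hG'sat D hD'
          refine ⟨i, fun j hj => Or.inl (hiG j hj), ?_⟩
          refine SATat_support D i ε' ε'' (fun j hj => ?_) hisat
          have hjG' := hiG j hj
          have : j ∉ {j : ℕ | j ∈ T} := by
            simp only [Set.mem_setOf_eq]
            intro hjT
            exact (hfresh j hjT).2 hjG'
          exact (hagree'' j this).symm
instance : Inhabited Kdom := ⟨aP⟩

section Choice
attribute [local instance] Classical.propDecidable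

/-- extract constraint data from a subbasic set. -/
noncomputable def toZCon (M : Set ↥endG) : ZCon :=
  if h : ∃ C : ZCon, M = Mset C then h.choose else default

lemma toZCon_spec {M : Set ↥endG} (h : ∃ C : ZCon, M = Mset C) : M = Mset (toZCon M) := by
  rw [toZCon, dif_pos h]; exact h.choose_spec

/-- a witness point for a constraint at a base assignment. -/
noncomputable def witW (εh : ℕ → Bool) (C : ZCon) : Gdom :=
  if h : ∃ a : Gdom,
      (wordEval (tEE εh) C.p0 C.ps).val a ≠ (wordEval (tEE εh) C.q0 C.qs).val a then
    h.choose
  else default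

lemma witW_spec {εh : ℕ → Bool} {C : ZCon}
    (h : ∃ a : Gdom,
      (wordEval (tEE εh) C.p0 C.ps).val a ≠ (wordEval (tEE εh) C.q0 C.qs).val a) :
    (wordEval (tEE εh) C.p0 C.ps).val (witW εh C) ≠
      (wordEval (tEE εh) C.q0 C.qs).val (witW εh C) := by
  rw [witW, dif_pos h]; exact h.choose_spec

lemma mem_Mset_exists_wit {εh : ℕ → Bool} {C : ZCon} (h : tEE εh ∈ Mset C) :
    ∃ a : Gdom,
      (wordEval (tEE εh) C.p0 C.ps).val a ≠ (wordEval (tEE εh) C.q0 C.qs).val a := by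
  have hvals : ((wordEval (tEE εh) C.p0 C.ps : ↥endG) : Function.End Gdom)
      ≠ (wordEval (tEE εh) C.q0 C.qs : ↥endG).val := fun hEq => h (Subtype.ext hEq)
  exact Function.ne_iff.mp hvals

end Choice

lemma par_zero (ps : List ↥endG) (p₀ : ↥endG) (i : ℕ) :
    par p₀ ps i (fun _ => false) = !ps.length.bodd := by
  have := par_flip ps p₀ i (fun _ => true) (fun _ => false) (trajL p₀ ps i)
    (fun _ hj => hj) (fun _ _ => rfl)
  rw [this, par_one]
  simp

lemma bool_even : ∀ a b : Bool, (a.xor b = false) → a = b := by decide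

lemma list_union_finite (L : List ZCon) (g : ZCon → ℕ) :
    {j : ℕ | ∃ C ∈ L, j ∈ trajLC C (g C)}.Finite := by
  induction L with
  | nil => convert Set.finite_empty using 1; ext j; simp
  | cons C L' ih =>
      have : {j : ℕ | ∃ D ∈ C :: L', j ∈ trajLC D (g D)} ⊆
          {j : ℕ | j ∈ trajLC C (g C)} ∪ {j : ℕ | ∃ D ∈ L', j ∈ trajLC D (g D)} := by
        intro j hj
        obtain ⟨D, hD, hjD⟩ := hj
        rcases List.mem_cons.mp hD with rfl | hD'
        · exact Or.inl hjD
        · exact Or.inr ⟨D, hD', hjD⟩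
      exact Set.Finite.subset (Set.Finite.union (trajLC C (g C)).finite_toSet ih) this
lemma zar_key (U V : Set ↥endG)
    (hU : @IsOpen ↥endG (zariskiTopology ↥endG) U)
    (hV : @IsOpen ↥endG (zariskiTopology ↥endG) V)
    (hpU : idCplus ∈ U) (hpV : idCminus ∈ V) : (U ∩ V).Nonempty := by
  classical
  letI : TopologicalSpace ↥endG := zariskiTopology ↥endG
  set S : Set (Set ↥endG) :=
    { M : Set ↥endG | ∃ (p₀ : ↥endG) (ps : List ↥endG) (q₀ : ↥endG) (qs : List ↥endG),
        M = { s : ↥endG | wordEval s p₀ ps ≠ wordEval s q₀ qs } } with hS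
  have hbasis := TopologicalSpace.isTopologicalBasis_of_subbasis (t := zariskiTopology ↥endG)
    (s := S) rfl
  obtain ⟨BU, hBUB, hxBU, hBUU⟩ := hbasis.exists_subset_of_mem_open hpU hU
  obtain ⟨BV, hBVB, hxBV, hBVV⟩ := hbasis.exists_subset_of_mem_open hpV hV
  obtain ⟨fU, ⟨hfUfin, hfUS⟩, rfl⟩ := hBUB
  obtain ⟨fV, ⟨hfVfin, hfVS⟩, rfl⟩ := hBVB
  -- convert subbasic sets to constraints
  have hSmem : ∀ M ∈ S, ∃ C : ZCon, M = Mset C := by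
    intro M hM
    obtain ⟨p₀, ps, q₀, qs, h⟩ := hM
    exact ⟨⟨p₀, ps, q₀, qs⟩, h⟩
  set LU : List ZCon := hfUfin.toFinset.toList.map toZCon with hLU
  set LV : List ZCon := hfVfin.toFinset.toList.map toZCon with hLV
  set LVo : List ZCon := LV.filter (fun C => (C.ps.length + C.qs.length).bodd) with hLVo
  -- witness existence facts
  have hUwit : ∀ M ∈ fU, ∃ a : Gdom,
      (wordEval (tEE (fun _ => true)) (toZCon M).p0 (toZCon M).ps).val a ≠
      (wordEval (tEE (fun _ => true)) (toZCon M).q0 (toZCon M).qs).val a := by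
    intro M hM
    apply mem_Mset_exists_wit
    rw [tEE_one, ← toZCon_spec (hSmem M (hfUS hM))]
    exact hxBU M hM
  have hVwit : ∀ M ∈ fV, ∃ a : Gdom,
      (wordEval (tEE (fun _ => false)) (toZCon M).p0 (toZCon M).ps).val a ≠
      (wordEval (tEE (fun _ => false)) (toZCon M).q0 (toZCon M).qs).val a := by
    intro M hM
    apply mem_Mset_exists_wit
    rw [tEE_zero, ← toZCon_spec (hSmem M (hfVS hM))]
    exact hxBV M hM
  -- the protected finite set of coordinates
  set F : Set ℕ := {j : ℕ | ∃ C ∈ LU, j ∈ trajLC C (witW (fun _ => true) C).1} ∪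
      {j : ℕ | ∃ C ∈ LV, j ∈ trajLC C (witW (fun _ => false) C).1} with hF
  have hFfin : F.Finite :=
    (list_union_finite LU (fun C => (witW (fun _ => true) C).1)).union
      (list_union_finite LV (fun C => (witW (fun _ => false) C).1))
  have hLVoodd : ∀ C ∈ LVo, (C.ps.length + C.qs.length).bodd = true := by
    intro C hC
    have := (List.mem_filter.mp hC).2
    simpa using this
  obtain ⟨ε', G, hGfin, hGF, hagree, hsat⟩ := main_rec LVo hLVoodd F hFfin (fun _ => true)
  have hεF : ∀ j ∈ F, ε' j = true := by
    intro j hj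
    exact hagree j (fun hjG => hGF j hjG hj)
  -- membership in the U-side subbasic sets
  have hmemU : ∀ M ∈ fU, tEE ε' ∈ M := by
    intro M hM
    rw [toZCon_spec (hSmem M (hfUS hM))]
    set C := toZCon M with hC
    have hCLU : C ∈ LU := by
      rw [hLU]
      exact List.mem_map.mpr ⟨M, by rw [Finset.mem_toList, Set.Finite.mem_toFinset]; exact hM, rfl⟩
    have hwit := witW_spec (hUwit M hM)
    set a := witW (fun _ => true) C with ha
    have hFj : ∀ j ∈ trajLC C a.1, ε' j = true := by
      intro j hj
      exact hεF j (Or.inl ⟨C, hCLU, hj⟩)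
    have hp1 : par C.p0 C.ps a.1 ε' = true := by
      rw [par_support C.ps C.p0 a.1 ε' (fun _ => true)
        (fun j hj => hFj j (by simp [trajLC, hj]))]
      exact par_one C.ps C.p0 a.1
    have hp2 : par C.q0 C.qs a.1 ε' = true := by
      rw [par_support C.qs C.q0 a.1 ε' (fun _ => true)
        (fun j hj => hFj j (by simp [trajLC, hj]))]
      exact par_one C.qs C.q0 a.1
    apply SATat_mem C a.1 ε'
    apply transfer C (fun _ => true) ε' a hwit
    rw [hp1, hp2, par_one, par_one]
  -- membership in the V-side subbasic sets
  have hmemV : ∀ M ∈ fV, tEE ε' ∈ M := by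
    intro M hM
    rw [toZCon_spec (hSmem M (hfVS hM))]
    set C := toZCon M with hC
    have hCLV : C ∈ LV := by
      rw [hLV]
      exact List.mem_map.mpr ⟨M, by rw [Finset.mem_toList, Set.Finite.mem_toFinset]; exact hM, rfl⟩
    by_cases hodd : (C.ps.length + C.qs.length).bodd = true
    · -- odd pair : handled by the main recursion
      have hCLVo : C ∈ LVo := by
        rw [hLVo]
        exact List.mem_filter.mpr ⟨hCLV, by simp [hodd]⟩
      obtain ⟨i, _, hsatC⟩ := hsat C hCLVo
      exact SATat_mem C i ε' hsatC
    · -- even pair : transfer from the witness at `idCminus`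
      have hwit := witW_spec (hVwit M hM)
      set a := witW (fun _ => false) C with ha
      have hFj : ∀ j ∈ trajLC C a.1, ε' j = true := by
        intro j hj
        exact hεF j (Or.inr ⟨C, hCLV, hj⟩)
      have hp1 : par C.p0 C.ps a.1 ε' = true := by
        rw [par_support C.ps C.p0 a.1 ε' (fun _ => true)
          (fun j hj => hFj j (by simp [trajLC, hj]))]
        exact par_one C.ps C.p0 a.1
      have hp2 : par C.q0 C.qs a.1 ε' = true := by
        rw [par_support C.qs C.q0 a.1 ε' (fun _ => true)
          (fun j hj => hFj j (by simp [trajLC, hj]))]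
        exact par_one C.qs C.q0 a.1
      have hbool : C.ps.length.bodd = C.qs.length.bodd := by
        apply bool_even
        rw [← Nat.bodd_add]
        simpa using hodd
      apply SATat_mem C a.1 ε'
      apply transfer C (fun _ => false) ε' a hwit
      rw [hp1, hp2, par_zero, par_zero, hbool]
      simp
  exact ⟨tEE ε', hBUU (fun M hM => hmemU M hM), hBVV (fun M hM => hmemV M hM)⟩
lemma idCplus_ne_idCminus : idCplus ≠ idCminus := by
  intro h
  have := congrFun (congrArg Subtype.val h) (0, aP)
  simp [idCplus, idCminus, ltimes, cplus, cminus, aP, aM] at this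
/-- The Zariski topology on `End(𝔾)` is not Hausdorff: the elements `id ⋉ c₊₁` and
`id ⋉ c₋₁` cannot be separated — any two Zariski-open sets containing them respectively
intersect. -/
theorem stmt19 :
    ¬ @T2Space ↥endG (zariskiTopology ↥endG) ∧
    ∀ U V : Set ↥endG,
      @IsOpen ↥endG (zariskiTopology ↥endG) U →
      @IsOpen ↥endG (zariskiTopology ↥endG) V →
      idCplus ∈ U → idCminus ∈ V → (U ∩ V).Nonempty := by
  refine ⟨?_, zar_key⟩
  intro hT2
  obtain ⟨u, v, hu, hv, hxu, hyv, huv⟩ :=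
    @t2_separation _ (zariskiTopology ↥endG) hT2 _ _ idCplus_ne_idCminus
  obtain ⟨t, htu, htv⟩ := zar_key u v hu hv hxu hyv
  exact Set.disjoint_left.mp huv htu htv
end
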